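/- Let K ∈ (0,1), K' > 0, α ∈ ℝ, and set γ := −(α+3)/2 and g(w) := w^γ for w > 0. Then for all r > 0 and all w > 0 the stationary identity holds: r^α·(r+K)^(−α−2)·g(wr/(r+K))·g(w/(r+K)) + (1−K)·K'^(−3−α)·r^α·g(w/K')·g(wr/K') − r^(−2)·g(w)·g(w/r) − r^α·g(w)·g(rw) = 0. In other words, the power law w ↦ w^(−(α+3)/2) annihilates the bracket in the ratio formulation of the size-spectrum equation for every feeding ratio r. -/
import Mathlib


open Set

/-- The power law `g(w) = w^(−(α+3)/2)` annihilates the bracket in the ratio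
formulation of the size-spectrum equation for every feeding ratio `r > 0` and every
body size `w > 0` (real powers throughout). -/
theorem powerlaw_stationary (K K' α : ℝ) (hK : K ∈ Ioo (0 : ℝ) 1) (hK' : 0 < K') :
    ∀ g : ℝ → ℝ, (∀ w : ℝ, g w = w ^ (-(α + 3) / 2)) →
    ∀ r : ℝ, 0 < r → ∀ w : ℝ, 0 < w →
      r ^ α * (r + K) ^ (-α - 2) * g (w * r / (r + K)) * g (w / (r + K))
        + (1 - K) * K' ^ (-3 - α) * r ^ α * g (w / K') * g (w * r / K')
        - r ^ (-2 : ℝ) * g w * g (w / r)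
        - r ^ α * g w * g (r * w) = 0 := by
  intro g hg r hr w hw
  obtain ⟨hK0, hK1⟩ := hK
  have hrK : (0:ℝ) < r + K := by linarith
  simp only [hg]
  set γ : ℝ := -(α + 3) / 2 with hγ
  have esplit : ∀ x y : ℝ, 0 < x → 0 < y → (x / y) ^ γ = x ^ γ * y ^ (-γ) := by
    intro x y hx hy
    rw [Real.div_rpow hx.le hy.le, Real.rpow_neg hy.le, div_eq_mul_inv]
  have e1 : (w * r / (r + K)) ^ γ = w ^ γ * r ^ γ * (r + K) ^ (-γ) := by
    rw [esplit _ _ (by positivity) hrK, Real.mul_rpow hw.le hr.le]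
  have e2 : (w / (r + K)) ^ γ = w ^ γ * (r + K) ^ (-γ) := esplit _ _ hw hrK
  have e3 : (w / K') ^ γ = w ^ γ * K' ^ (-γ) := esplit _ _ hw hK'
  have e4 : (w * r / K') ^ γ = w ^ γ * r ^ γ * K' ^ (-γ) := by
    rw [esplit _ _ (by positivity) hK', Real.mul_rpow hw.le hr.le]
  have e5 : (w / r) ^ γ = w ^ γ * r ^ (-γ) := esplit _ _ hw hr
  have e6 : (r * w) ^ γ = r ^ γ * w ^ γ := Real.mul_rpow hr.le hw.le
  rw [e1, e2, e3, e4, e5, e6]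
  have hA : (r + K) ^ (-α - 2) * ((r + K) ^ (-γ) * (r + K) ^ (-γ)) = r + K := by
    rw [← Real.rpow_add hrK, ← Real.rpow_add hrK]
    have h : -α - 2 + (-γ + -γ) = 1 := by rw [hγ]; ring
    rw [h, Real.rpow_one]
  have hB : K' ^ (-3 - α) * (K' ^ (-γ) * K' ^ (-γ)) = 1 := by
    rw [← Real.rpow_add hK', ← Real.rpow_add hK']
    have h : -3 - α + (-γ + -γ) = 0 := by rw [hγ]; ring
    rw [h, Real.rpow_zero]
  have hr1 : r ^ α * r ^ γ = r ^ (α + γ) := (Real.rpow_add hr α γ).symm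
  have hr2 : r ^ (-2 : ℝ) * r ^ (-γ) = r ^ (α + γ) * r := by
    rw [← Real.rpow_add hr]
    have h : (-2 : ℝ) + -γ = α + γ + 1 := by rw [hγ]; ring
    rw [h, Real.rpow_add hr, Real.rpow_one]
  have t1 : r ^ α * (r + K) ^ (-α - 2) * (w ^ γ * r ^ γ * (r + K) ^ (-γ)) *
      (w ^ γ * (r + K) ^ (-γ)) = (r + K) * (r ^ (α + γ) * (w ^ γ * w ^ γ)) := by
    calc r ^ α * (r + K) ^ (-α - 2) * (w ^ γ * r ^ γ * (r + K) ^ (-γ)) *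
        (w ^ γ * (r + K) ^ (-γ))
        = (r + K) ^ (-α - 2) * ((r + K) ^ (-γ) * (r + K) ^ (-γ)) *
          (r ^ α * r ^ γ * (w ^ γ * w ^ γ)) := by ring
      _ = (r + K) * (r ^ (α + γ) * (w ^ γ * w ^ γ)) := by rw [hA, hr1]
  have t2 : (1 - K) * K' ^ (-3 - α) * r ^ α * (w ^ γ * K' ^ (-γ)) *
      (w ^ γ * r ^ γ * K' ^ (-γ)) = (1 - K) * (r ^ (α + γ) * (w ^ γ * w ^ γ)) := by
    rw [← hr1]
    calc (1 - K) * K' ^ (-3 - α) * r ^ α * (w ^ γ * K' ^ (-γ)) *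
        (w ^ γ * r ^ γ * K' ^ (-γ))
        = (1 - K) * (K' ^ (-3 - α) * (K' ^ (-γ) * K' ^ (-γ))) *
          (r ^ α * r ^ γ * (w ^ γ * w ^ γ)) := by ring
      _ = (1 - K) * (r ^ α * r ^ γ * (w ^ γ * w ^ γ)) := by rw [hB, mul_one]
  have t3 : r ^ (-2 : ℝ) * w ^ γ * (w ^ γ * r ^ (-γ)) =
      r * (r ^ (α + γ) * (w ^ γ * w ^ γ)) := by
    calc r ^ (-2 : ℝ) * w ^ γ * (w ^ γ * r ^ (-γ))
        = r ^ (-2 : ℝ) * r ^ (-γ) * (w ^ γ * w ^ γ) := by ring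
      _ = r ^ (α + γ) * r * (w ^ γ * w ^ γ) := by rw [hr2]
      _ = r * (r ^ (α + γ) * (w ^ γ * w ^ γ)) := by ring
  have t4 : r ^ α * w ^ γ * (r ^ γ * w ^ γ) = r ^ (α + γ) * (w ^ γ * w ^ γ) := by
    rw [← hr1]; ring
  rw [t1, t2, t3, t4]; ring
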